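/- Let F ∈ L^{N×NM}, let S be an equivalence relation on Δ_N, let S_u = {(a,a') : a' = F⋉u⋉a}, and define R₁ = S, R_{k+1} = (⋂_{u∈Δ_M} S_u⁻¹ ∘ R_k ∘ S_u) ∩ R_k. If k* satisfies R_{k*+1} = R_{k*}, then R_{k*} is the maximal relation contained in S satisfying the invariance property ((a,b)∈R ⟹ (F⋉u⋉a, F⋉u⋉b)∈R for all u ∈ Δ_M), and moreover R_{k*} is an equivalence relation on Δ_N. -/

import Mathlib

open Matrix

noncomputable section
open scoped Classical

/-- The `i`-th canonical basis vector of length `N`. -/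
def canon {N : ℕ} (i : Fin N) : Fin N → ℝ := Pi.single i 1

/-- `Delta N` is the set of canonical basis vectors of length `N`. -/
def Delta (N : ℕ) : Set (Fin N → ℝ) := {v | ∃ i, v = canon i}

/-- A logical matrix: every column is a canonical basis vector. -/
def IsLogical {m : ℕ} {J : Type*} (A : Matrix (Fin m) J ℝ) : Prop :=
  ∀ j : J, ∃ i : Fin m, (fun r => A r j) = canon i

/-- Full row rank for a logical matrix: every canonical vector occurs among the columns. -/
def FullRowRank {m : ℕ} {J : Type*} (A : Matrix (Fin m) J ℝ) : Prop :=
  ∀ i : Fin m, ∃ j : J, (fun r => A r j) = canon i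

/-- Semitensor product `F ⋉ u ⋉ x` for a BCN matrix `F ∈ L^{N×NM}`:
`F` times the Kronecker product `u ⊗ x`. -/
def stp {N M : ℕ} (F : Matrix (Fin N) (Fin M × Fin N) ℝ)
    (u : Fin M → ℝ) (x : Fin N → ℝ) : Fin N → ℝ :=
  F.mulVec (fun p => u p.1 * x p.2)

/-- Relational composition `A ∘ B`: `(a,c) ∈ A ∘ B ↔ ∃ b, (a,b) ∈ B ∧ (b,c) ∈ A`. -/
def rcomp {α : Type*} (A B : Set (α × α)) : Set (α × α) :=
  {p | ∃ b, (p.1, b) ∈ B ∧ (b, p.2) ∈ A}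

/-- Relational inverse. -/
def rinv {α : Type*} (A : Set (α × α)) : Set (α × α) := {p | (p.2, p.1) ∈ A}

/-- The transition relation `S_u = {(a, F⋉u⋉a) : a ∈ Δ_N}`. -/
def Su {N M : ℕ} (F : Matrix (Fin N) (Fin M × Fin N) ℝ) (u : Fin M → ℝ) :
    Set ((Fin N → ℝ) × (Fin N → ℝ)) :=
  {p | p.1 ∈ Delta N ∧ p.2 = stp F u p.1}

/-- The iteration `R₁ = S`, `R_{k+1} = (⋂_u S_u⁻¹ ∘ R_k ∘ S_u) ∩ R_k`
(`Rseq F S k` is `R_{k+1}` of the paper). -/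
def Rseq {N M : ℕ} (F : Matrix (Fin N) (Fin M × Fin N) ℝ)
    (S : Set ((Fin N → ℝ) × (Fin N → ℝ))) : ℕ → Set ((Fin N → ℝ) × (Fin N → ℝ))
  | 0 => S
  | k + 1 =>
    (⋂ u ∈ Delta M, rcomp (rinv (Su F u)) (rcomp (Rseq F S k) (Su F u))) ∩ Rseq F S k

lemma stp_mem_Delta {N M : ℕ} {F : Matrix (Fin N) (Fin M × Fin N) ℝ} (hF : IsLogical F)
    {u : Fin M → ℝ} (hu : u ∈ Delta M) {a : Fin N → ℝ} (ha : a ∈ Delta N) :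
    stp F u a ∈ Delta N := by
  obtain ⟨p, rfl⟩ := hu
  obtain ⟨i, rfl⟩ := ha
  have hv : (fun q : Fin M × Fin N => canon p q.1 * canon i q.2) = Pi.single (p, i) 1 := by
    funext q
    rcases q with ⟨q1, q2⟩
    simp only [canon, Pi.single_apply, Prod.mk.injEq]
    by_cases h1 : q1 = p <;> by_cases h2 : q2 = i <;> simp [h1, h2, Prod.ext_iff]
  obtain ⟨i', hi'⟩ := hF (p, i)
  refine ⟨i', ?_⟩
  unfold stp
  rw [hv, Matrix.mulVec_single]
  ext r; simpa using congrFun hi' r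

lemma mem_Rsucc {N M : ℕ} (F : Matrix (Fin N) (Fin M × Fin N) ℝ)
    (S : Set ((Fin N → ℝ) × (Fin N → ℝ))) (k : ℕ) (a b : Fin N → ℝ) :
    (a, b) ∈ Rseq F S (k + 1) ↔
      (∀ u ∈ Delta M, a ∈ Delta N ∧ b ∈ Delta N ∧
        (stp F u a, stp F u b) ∈ Rseq F S k) ∧ (a, b) ∈ Rseq F S k := by
  show (a, b) ∈ (⋂ u ∈ Delta M, rcomp (rinv (Su F u)) (rcomp (Rseq F S k) (Su F u)))
      ∩ Rseq F S k ↔ _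
  rw [Set.mem_inter_iff, and_congr_left_iff]
  intro _
  simp only [Set.mem_iInter]
  constructor
  · intro h u hu
    obtain ⟨c, ⟨d, ⟨haD, hd⟩, hdc⟩, hbD, hc⟩ := h u hu
    dsimp only at haD hd hdc hbD hc
    subst hd; subst hc
    exact ⟨haD, hbD, hdc⟩
  · intro h u hu
    obtain ⟨haD, hbD, hr⟩ := h u hu
    exact ⟨stp F u b, ⟨stp F u a, ⟨haD, rfl⟩, hr⟩, hbD, rfl⟩

lemma Rseq_subset {N M : ℕ} (F : Matrix (Fin N) (Fin M × Fin N) ℝ)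
    (S : Set ((Fin N → ℝ) × (Fin N → ℝ))) : ∀ k, Rseq F S k ⊆ S := by
  intro k
  induction k with
  | zero => exact subset_rfl
  | succ k ih => exact fun p hp => ih (Set.inter_subset_right hp)

/-- if the iteration stabilizes at `k*`, then `R_{k*}` is the maximal
relation contained in `S` satisfying the invariance property, and it is an equivalence
relation on `Δ_N`. (`Rseq F S k` is `R_{k+1}` of the paper.) -/
theorem stmt11 {N M : ℕ} (F : Matrix (Fin N) (Fin M × Fin N) ℝ) (hF : IsLogical F)
    (S : Set ((Fin N → ℝ) × (Fin N → ℝ)))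
    (hsub : S ⊆ Delta N ×ˢ Delta N)
    (hrefl : ∀ a ∈ Delta N, (a, a) ∈ S)
    (hsymm : ∀ a b, (a, b) ∈ S → (b, a) ∈ S)
    (htrans : ∀ a b c, (a, b) ∈ S → (b, c) ∈ S → (a, c) ∈ S)
    (kstar : ℕ) (hfix : Rseq F S (kstar + 1) = Rseq F S kstar) :
    Rseq F S kstar ⊆ S ∧
    (∀ a b, (a, b) ∈ Rseq F S kstar →
      ∀ u ∈ Delta M, (stp F u a, stp F u b) ∈ Rseq F S kstar) ∧
    (∀ R' : Set ((Fin N → ℝ) × (Fin N → ℝ)), R' ⊆ S →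
      (∀ a b, (a, b) ∈ R' → ∀ u ∈ Delta M, (stp F u a, stp F u b) ∈ R') →
      R' ⊆ Rseq F S kstar) ∧
    ((∀ a ∈ Delta N, (a, a) ∈ Rseq F S kstar) ∧
     (∀ a b, (a, b) ∈ Rseq F S kstar → (b, a) ∈ Rseq F S kstar) ∧
     (∀ a b c, (a, b) ∈ Rseq F S kstar → (b, c) ∈ Rseq F S kstar →
        (a, c) ∈ Rseq F S kstar)) := by
  have hsubk : ∀ k, Rseq F S k ⊆ S := Rseq_subset F S
  -- equivalence relation at every stage
  have hequiv : ∀ k, (∀ a ∈ Delta N, (a, a) ∈ Rseq F S k) ∧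
      (∀ a b, (a, b) ∈ Rseq F S k → (b, a) ∈ Rseq F S k) ∧
      (∀ a b c, (a, b) ∈ Rseq F S k → (b, c) ∈ Rseq F S k → (a, c) ∈ Rseq F S k) := by
    intro k
    induction k with
    | zero => exact ⟨hrefl, hsymm, htrans⟩
    | succ k ih =>
      obtain ⟨ir, is, it⟩ := ih
      refine ⟨?_, ?_, ?_⟩
      · intro a ha
        rw [mem_Rsucc]
        exact ⟨fun u hu => ⟨ha, ha, ir _ (stp_mem_Delta hF hu ha)⟩, ir a ha⟩
      · intro a b hab
        rw [mem_Rsucc] at hab ⊢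
        obtain ⟨h1, h2⟩ := hab
        refine ⟨fun u hu => ?_, is _ _ h2⟩
        obtain ⟨ha, hb, hr⟩ := h1 u hu
        exact ⟨hb, ha, is _ _ hr⟩
      · intro a b c hab hbc
        rw [mem_Rsucc] at hab hbc ⊢
        refine ⟨fun u hu => ?_, it _ _ _ hab.2 hbc.2⟩
        obtain ⟨ha, hb, hr1⟩ := hab.1 u hu
        obtain ⟨_, hc, hr2⟩ := hbc.1 u hu
        exact ⟨ha, hc, it _ _ _ hr1 hr2⟩
  refine ⟨hsubk kstar, ?_, ?_, hequiv kstar⟩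
  · intro a b hab u hu
    rw [← hfix, mem_Rsucc] at hab
    exact (hab.1 u hu).2.2
  · intro R' hR'S hinv
    have : ∀ k, R' ⊆ Rseq F S k := by
      intro k
      induction k with
      | zero => exact hR'S
      | succ k ih =>
        intro p hp
        rcases p with ⟨a, b⟩
        rw [mem_Rsucc]
        refine ⟨fun u hu => ?_, ih hp⟩
        have hmem := hsub (hR'S hp)
        exact ⟨hmem.1, hmem.2, ih (hinv a b hp u hu)⟩
    exact this kstar
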